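/- Let k ≥ 2 and suppose the points a_{ij} satisfy the node condition: a_{ij} ≠ a_{ik} whenever j ≠ k, and a_{ji} ≠ a_{ki} whenever j ≠ k. Then ϑ evaluated at λ_{ij} = 0, μ_{ij} = 1 for all (i,j) ∈ P is nonzero, and ϑ evaluated at λ_{ij} = 1, μ_{ij} = 0 for all (i,j) ∈ P is nonzero. (Equivalently, the functions ϑ_{1,0} and ϑ_{0,1} do not vanish at the origin.) -/
import Mathlib


namespace ReducibleSpectral

noncomputable section

/-- The row index `(i, t)` (with `t : Fin (k-1)`) corresponds to the pair `(i, j) ∈ P`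
(where `P = {(i,j) : i ≠ j}`), with `j` the `t`-th element of `{0,…,k-1} \ {i}`;
this identification is order-preserving for the lexicographic orders. -/
def colToRow (k : ℕ) (i : Fin k) (t : Fin (k - 1)) : Fin k :=
  if (t : ℕ) < (i : ℕ) then ⟨t, by have := t.isLt; omega⟩
  else ⟨(t : ℕ) + 1, by have := t.isLt; have := i.isLt; omega⟩

/-- The matrix `Ξ(λ,μ)`: rows indexed by `P = {(i,j) : i ≠ j}` (in lexicographic order,
encoded via `colToRow`), columns indexed by pairs `(m,n)`, `m ∈ {1,…,k}`, `n ∈ {0,…,k-2}`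
(lexicographic); the entry at row `(i,j)`, column `(m,n)` is `λ_{ij}·a_{ij}^n` if `m = i`,
`μ_{ij}·a_{ij}^n` if `m = j`, and `0` otherwise. -/
def Xi (k : ℕ) (a lam mu : Fin k → Fin k → ℂ) :
    Matrix (Fin k × Fin (k - 1)) (Fin k × Fin (k - 1)) ℂ :=
  fun p q =>
    if q.1 = p.1 then lam p.1 (colToRow k p.1 p.2) * a p.1 (colToRow k p.1 p.2) ^ (q.2 : ℕ)
    else if q.1 = colToRow k p.1 p.2 then
      mu p.1 (colToRow k p.1 p.2) * a p.1 (colToRow k p.1 p.2) ^ (q.2 : ℕ)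
    else 0

/-- The extended theta function `ϑ(λ,μ) = det Ξ(λ,μ)`. -/
def theta (k : ℕ) (a lam mu : Fin k → Fin k → ℂ) : ℂ := (Xi k a lam mu).det

/-- The index set `P = {(i,j) : i,j ∈ {1,…,k}, i ≠ j}` as a finset. -/
def Pfin (k : ℕ) : Finset (Fin k × Fin k) :=
  Finset.univ.filter fun p => p.1 ≠ p.2

/-- For `L ⊆ P`, the set `L_i = {(i,j) ∈ L} ∪ {(m,i) ∈ P : (m,i) ∉ L}`. -/
def Lset (k : ℕ) (L : Finset (Fin k × Fin k)) (i : Fin k) : Finset (Fin k × Fin k) :=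
  (L.filter fun p => p.1 = i) ∪ ((Pfin k \ L).filter fun p => p.2 = i)

/-- `L ⊆ P` is regular iff every `L_i` has cardinality `k - 1`. -/
def IsRegular (k : ℕ) (L : Finset (Fin k × Fin k)) : Prop :=
  ∀ i : Fin k, (Lset k L i).card = k - 1


lemma colToRow_val (k : ℕ) (i : Fin k) (t : Fin (k - 1)) :
    (colToRow k i t : ℕ) = if (t : ℕ) < (i : ℕ) then (t : ℕ) else (t : ℕ) + 1 := by
  simp only [colToRow]; split <;> rfl

lemma colToRow_ne (k : ℕ) (i : Fin k) (t : Fin (k - 1)) : colToRow k i t ≠ i := by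
  intro h
  have := congrArg Fin.val h
  rw [colToRow_val] at this
  split at this <;> omega

lemma colToRow_inj (k : ℕ) (i : Fin k) : Function.Injective (colToRow k i) := by
  intro t t' h
  have := congrArg Fin.val h
  rw [colToRow_val, colToRow_val] at this
  apply Fin.ext
  split at this <;> split at this <;> omega

def flipIdx (k : ℕ) (p : Fin k × Fin (k - 1)) : Fin k × Fin (k - 1) :=
  ⟨colToRow k p.1 p.2,
   ⟨if ((p.2 : ℕ) < (p.1 : ℕ)) then (p.1 : ℕ) - 1 else (p.1 : ℕ),
    by have h1 := p.1.isLt; have h2 := p.2.isLt; split <;> omega⟩⟩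

lemma flip_flip (k : ℕ) (p : Fin k × Fin (k - 1)) : flipIdx k (flipIdx k p) = p := by
  obtain ⟨i, t⟩ := p
  have h1 := i.isLt; have h2 := t.isLt
  simp only [flipIdx, Prod.mk.injEq]
  constructor
  · apply Fin.ext
    simp only [colToRow_val, Fin.val_mk]
    split_ifs <;> omega
  · apply Fin.ext
    simp only [colToRow_val, Fin.val_mk]
    split_ifs <;> omega

def flipEquiv (k : ℕ) : Equiv.Perm (Fin k × Fin (k - 1)) :=
  ⟨flipIdx k, flipIdx k, flip_flip k, flip_flip k⟩

lemma colToRow_flip (k : ℕ) (p : Fin k × Fin (k - 1)) :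
    colToRow k (flipIdx k p).1 (flipIdx k p).2 = p.1 := by
  have := congrArg Prod.fst (flip_flip k p)
  exact this


lemma vand01_ne (k : ℕ) (a : Fin k → Fin k → ℂ)
    (hnode : ∀ i j l : Fin k, i ≠ j → i ≠ l → j ≠ l →
      a i j ≠ a i l ∧ a j i ≠ a l i) (j : Fin k) :
    (Matrix.vandermonde fun s : Fin (k - 1) => a (colToRow k j s) j).det ≠ 0 := by
  rw [Matrix.det_vandermonde_ne_zero_iff]
  intro s s' h
  by_contra hss
  have hs : colToRow k j s ≠ colToRow k j s' := fun hc => hss (colToRow_inj k j hc)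
  exact (hnode j (colToRow k j s) (colToRow k j s')
    (Ne.symm (colToRow_ne k j s)) (Ne.symm (colToRow_ne k j s')) hs).2 h

lemma vand10_ne (k : ℕ) (a : Fin k → Fin k → ℂ)
    (hnode : ∀ i j l : Fin k, i ≠ j → i ≠ l → j ≠ l →
      a i j ≠ a i l ∧ a j i ≠ a l i) (i : Fin k) :
    (Matrix.vandermonde fun t : Fin (k - 1) => a i (colToRow k i t)).det ≠ 0 := by
  rw [Matrix.det_vandermonde_ne_zero_iff]
  intro t t' h
  by_contra htt
  have ht : colToRow k i t ≠ colToRow k i t' := fun hc => htt (colToRow_inj k i hc)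
  exact (hnode i (colToRow k i t) (colToRow k i t')
    (Ne.symm (colToRow_ne k i t)) (Ne.symm (colToRow_ne k i t')) ht).1 h


/-- under the node condition (`a_{ij} ≠ a_{il}` and `a_{ji} ≠ a_{li}` for
`j ≠ l`), the theta function does not vanish at `(λ,μ) = (0,1)` nor at `(λ,μ) = (1,0)`;
equivalently, `ϑ_{1,0}` and `ϑ_{0,1}` do not vanish at the origin of the (compactified)
Jacobian. -/
theorem theta_ne_zero_at_origin (k : ℕ) (hk : 2 ≤ k) (a : Fin k → Fin k → ℂ)
    (hnode : ∀ i j l : Fin k, i ≠ j → i ≠ l → j ≠ l →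
      a i j ≠ a i l ∧ a j i ≠ a l i) :
    theta k a (fun _ _ => 0) (fun _ _ => 1) ≠ 0 ∧
      theta k a (fun _ _ => 1) (fun _ _ => 0) ≠ 0 := by
  constructor
  · -- (λ,μ) = (0,1)
    have hperm : (Xi k a (fun _ _ => 0) (fun _ _ => 1)).submatrix (flipEquiv k) id =
        (Matrix.blockDiagonal fun j => Matrix.vandermonde fun s : Fin (k - 1) =>
          a (colToRow k j s) j).submatrix
          (Equiv.prodComm (Fin k) (Fin (k - 1))) (Equiv.prodComm (Fin k) (Fin (k - 1))) := by
      ext p q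
      simp only [Xi, Matrix.submatrix_apply, Matrix.blockDiagonal_apply,
        Matrix.vandermonde, Equiv.prodComm_apply, Prod.fst_swap, Prod.snd_swap,
        Matrix.of_apply, zero_mul, one_mul, flipEquiv, Equiv.coe_fn_mk, id_eq]
      rw [colToRow_flip]
      have hne : (flipIdx k p).1 ≠ p.1 := colToRow_ne k p.1 p.2
      rcases eq_or_ne q.1 p.1 with h2 | h2
      · rw [if_neg (fun h => hne (h.symm.trans h2)), if_pos h2, if_pos h2.symm]
        rfl
      · rcases eq_or_ne q.1 (flipIdx k p).1 with h1 | h1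
        · rw [if_pos h1, if_neg (show ¬ p.1 = q.1 from fun h => h2 h.symm)]
        · rw [if_neg h1, if_neg h2, if_neg (show ¬ p.1 = q.1 from fun h => h2 h.symm)]
    have hdet : ((Xi k a (fun _ _ => 0) (fun _ _ => 1)).submatrix (flipEquiv k) id).det ≠ 0 := by
      rw [hperm, Matrix.det_submatrix_equiv_self, Matrix.det_blockDiagonal]
      exact Finset.prod_ne_zero_iff.2 fun j _ => vand01_ne k a hnode j
    rw [Matrix.det_permute] at hdet
    intro h0
    rw [theta] at h0
    rw [h0, mul_zero] at hdet
    exact hdet rfl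
  · -- (λ,μ) = (1,0)
    have heq : Xi k a (fun _ _ => 1) (fun _ _ => 0) =
        (Matrix.blockDiagonal fun i => Matrix.vandermonde fun t : Fin (k - 1) =>
          a i (colToRow k i t)).submatrix
          (Equiv.prodComm (Fin k) (Fin (k - 1))) (Equiv.prodComm (Fin k) (Fin (k - 1))) := by
      ext p q
      simp only [Xi, Matrix.submatrix_apply, Matrix.blockDiagonal_apply,
        Matrix.vandermonde, Equiv.prodComm_apply, Prod.fst_swap, Prod.snd_swap,
        Matrix.of_apply, zero_mul, one_mul]
      rcases eq_or_ne q.1 p.1 with h1 | h1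
      · rw [if_pos h1, if_pos h1.symm]
      · rw [if_neg h1, if_neg (show ¬ p.1 = q.1 from fun h => h1 h.symm)]
        split <;> rfl
    rw [theta, heq, Matrix.det_submatrix_equiv_self, Matrix.det_blockDiagonal]
    exact Finset.prod_ne_zero_iff.2 fun i _ => vand10_ne k a hnode i

end

end ReducibleSpectral
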